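/- For the ODE system ρ μ' = 4(μ − 1), ρ' = −4(μ^{-1}+3) in positive functions with μ(0) ≠ 1, any maximal solution is defined on an interval of the form (−∞, T) with T finite, and along the solution ρ(t) → ∞ and μ(t) → 1 as t → −∞. -/

import Mathlib

open Set Filter Topology

private lemma HasDerivAt.fst' {f : ℝ → ℝ × ℝ} {p : ℝ × ℝ} {t : ℝ} (h : HasDerivAt f p t) :
    HasDerivAt (fun s => (f s).1) p.1 t := by
  have h2 := h.hasFDerivAt.fst.hasDerivAt
  simpa using h2

private lemma HasDerivAt.snd' {f : ℝ → ℝ × ℝ} {p : ℝ × ℝ} {t : ℝ} (h : HasDerivAt f p t) :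
    HasDerivAt (fun s => (f s).2) p.2 t := by
  have h2 := h.hasFDerivAt.snd.hasDerivAt
  simpa using h2

/-- the g-estimate -/
private lemma gbound {m ε : ℝ} (hm : 0 < m) (hε : 0 < ε)
    (h : (m - 1)^4 / m < min (ε^4/2) (1/2)) : |m - 1| < ε := by
  by_contra hc
  push_neg at hc
  rw [div_lt_iff₀ hm] at h
  have h1 : (m-1)^4 < ε^4/2 * m := lt_of_lt_of_le h (by
    have := min_le_left (ε^4/2) (1/2); nlinarith)
  have h2 : (m-1)^4 < 1/2 * m := lt_of_lt_of_le h (by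
    have := min_le_right (ε^4/2) (1/2); nlinarith)
  have habs : ε ^ 4 ≤ (m-1)^4 := by
    calc ε ^ 4 ≤ |m-1| ^ 4 := pow_le_pow_left₀ hε.le hc 4
    _ = (m-1)^4 := by rw [← abs_pow, abs_of_nonneg (by positivity)]
  rcases le_or_gt m 2 with hm2 | hm2
  · nlinarith [mul_nonneg (by positivity : (0:ℝ) ≤ ε^4/2) (by linarith : (0:ℝ) ≤ 2 - m)]
  · nlinarith [sq_nonneg (m-1), sq_nonneg ((m-1)^2 - 1)]

private lemma antitone_pair {D : Set ℝ} (hconn : D.OrdConnected) {f f' : ℝ → ℝ}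
    (hf : ∀ t ∈ D, HasDerivAt f (f' t) t) (hneg : ∀ t ∈ D, f' t ≤ 0)
    {s t : ℝ} (hs : s ∈ D) (ht : t ∈ D) (hst : s ≤ t) : f t ≤ f s := by
  have hsub : Icc s t ⊆ D := hconn.out hs ht
  have cont : ContinuousOn f (Icc s t) := fun x hx =>
    (hf x (hsub hx)).continuousAt.continuousWithinAt
  have diff : DifferentiableOn ℝ f (interior (Icc s t)) := fun x hx =>
    ((hf x (hsub (interior_subset hx))).differentiableAt).differentiableWithinAt
  have hanti : AntitoneOn f (Icc s t) := by
    apply antitoneOn_of_deriv_nonpos (convex_Icc s t) cont diff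
    intro x hx
    rw [(hf x (hsub (interior_subset hx))).deriv]
    exact hneg x (hsub (interior_subset hx))
  exact hanti (left_mem_Icc.2 hst) (right_mem_Icc.2 hst) hst

private lemma monotone_pair {D : Set ℝ} (hconn : D.OrdConnected) {f f' : ℝ → ℝ}
    (hf : ∀ t ∈ D, HasDerivAt f (f' t) t) (hpos : ∀ t ∈ D, 0 ≤ f' t)
    {s t : ℝ} (hs : s ∈ D) (ht : t ∈ D) (hst : s ≤ t) : f s ≤ f t := by
  have hsub : Icc s t ⊆ D := hconn.out hs ht
  have cont : ContinuousOn f (Icc s t) := fun x hx =>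
    (hf x (hsub hx)).continuousAt.continuousWithinAt
  have diff : DifferentiableOn ℝ f (interior (Icc s t)) := fun x hx =>
    ((hf x (hsub (interior_subset hx))).differentiableAt).differentiableWithinAt
  have hmono : MonotoneOn f (Icc s t) := by
    apply monotoneOn_of_deriv_nonneg (convex_Icc s t) cont diff
    intro x hx
    rw [(hf x (hsub (interior_subset hx))).deriv]
    exact hpos x (hsub (interior_subset hx))
  exact hmono (left_mem_Icc.2 hst) (right_mem_Icc.2 hst) hst

private lemma F_hasDeriv {ρ μ : ℝ → ℝ} {t : ℝ} (hρt : 0 < ρ t) (hμt : 0 < μ t)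
    (hμd : HasDerivAt μ (4 * (μ t - 1) / ρ t) t)
    (hρd : HasDerivAt ρ (-4 * ((μ t)⁻¹ + 3)) t) :
    HasDerivAt (fun s => ρ s * (μ s - 1)^4 / μ s) 0 t := by
  have h2 := (hμd.sub_const 1).pow 4
  have h3 := hρd.mul h2
  have h4 := h3.div hμd (ne_of_gt hμt)
  refine h4.congr_deriv ?_
  have hρ0 : ρ t ≠ 0 := ne_of_gt hρt
  have hμ0 : μ t ≠ 0 := ne_of_gt hμt
  push_cast
  simp only [Pi.mul_apply, Pi.pow_apply]
  field_simp
  ring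
/-- Any maximal positive solution of `ρ μ' = 4(μ−1)`, `ρ' = −4(μ⁻¹+3)` with `μ ≠ 1`
somewhere is ancient: its domain is `(−∞, T)` for some finite `T`, and as `t → −∞`,
`ρ(t) → ∞` and `μ(t) → 1`. -/
theorem chowYang_flow_ancient (D : Set ℝ) (hDopen : IsOpen D) (hDconn : D.OrdConnected)
    (hDne : D.Nonempty) (ρ μ : ℝ → ℝ)
    (hρpos : ∀ t ∈ D, 0 < ρ t) (hμpos : ∀ t ∈ D, 0 < μ t)
    (hμ : ∀ t ∈ D, HasDerivAt μ (4 * (μ t - 1) / ρ t) t)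
    (hρ : ∀ t ∈ D, HasDerivAt ρ (-4 * ((μ t)⁻¹ + 3)) t)
    (hne1 : ∃ t ∈ D, μ t ≠ 1)
    (hmax : ∀ (D' : Set ℝ) (ρ' μ' : ℝ → ℝ), IsOpen D' → D'.OrdConnected → D ⊆ D' →
      (∀ t ∈ D, ρ' t = ρ t ∧ μ' t = μ t) →
      (∀ t ∈ D', 0 < ρ' t ∧ 0 < μ' t ∧
        HasDerivAt μ' (4 * (μ' t - 1) / ρ' t) t ∧
        HasDerivAt ρ' (-4 * ((μ' t)⁻¹ + 3)) t) → D' = D) :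
    ∃ T : ℝ, D = Set.Iio T ∧
      Filter.Tendsto ρ Filter.atBot Filter.atTop ∧
      Filter.Tendsto μ Filter.atBot (nhds 1) := by
  classical
  obtain ⟨ts, hts, htsne⟩ := hne1
  obtain ⟨t₀, ht₀⟩ := hDne
  -- conserved quantity
  set F : ℝ → ℝ := fun s => ρ s * (μ s - 1)^4 / μ s with hF
  have hFd : ∀ t ∈ D, HasDerivAt F 0 t := fun t ht =>
    F_hasDeriv (hρpos t ht) (hμpos t ht) (hμ t ht) (hρ t ht)
  have hFc : ∀ s ∈ D, ∀ t ∈ D, F t = F s := by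
    have key : ∀ s ∈ D, ∀ t ∈ D, s ≤ t → F t = F s := by
      intro s hs t ht hst
      have hsub : Icc s t ⊆ D := hDconn.out hs ht
      have := constant_of_has_deriv_right_zero
        (f := F) (a := s) (b := t)
        (fun x hx => (hFd x (hsub hx)).continuousAt.continuousWithinAt)
        (fun x hx => (hFd x (hsub (Ico_subset_Icc_self hx))).hasDerivWithinAt)
      exact this t (right_mem_Icc.2 hst)
    intro s hs t ht
    rcases le_total s t with h | h
    · exact key s hs t ht h
    · exact (key t ht s hs h).symm
  set c := F ts with hc
  have h4pos : 0 < (μ ts - 1)^4 := by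
    have h := sub_ne_zero.2 htsne
    have : (0:ℝ) < |μ ts - 1|^4 := pow_pos (abs_pos.2 h) 4
    rwa [← abs_pow, abs_of_nonneg (by positivity)] at this
  have hcpos : 0 < c := div_pos (mul_pos (hρpos ts hts) h4pos) (hμpos ts hts)
  have hFeq : ∀ t ∈ D, F t = c := fun t ht => hFc ts hts t ht
  have hμne1 : ∀ t ∈ D, μ t ≠ 1 := by
    intro t ht h1
    have h2 := hFeq t ht
    rw [hF] at h2
    simp only [h1] at h2
    norm_num at h2
    exact absurd h2.symm (ne_of_gt hcpos)
  -- ρ decays at rate at least 12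
  have hgd : ∀ t ∈ D, HasDerivAt (fun s => ρ s + 12*s) (-4*((μ t)⁻¹+3) + 12) t := by
    intro t ht
    have h12 : HasDerivAt (fun s : ℝ => 12*s) 12 t := by
      simpa using (hasDerivAt_id t).const_mul (12:ℝ)
    exact (hρ t ht).add h12
  have hrho_key : ∀ s ∈ D, ∀ t ∈ D, s ≤ t → ρ t + 12*t ≤ ρ s + 12*s := by
    intro s hs t ht hst
    refine antitone_pair hDconn hgd (fun u hu => ?_) hs ht hst
    have h := inv_pos.2 (hμpos u hu)
    linarith
  -- D is bounded above
  have hBdd : BddAbove D := by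
    refine ⟨max t₀ ((ρ t₀ + 12*t₀)/12), fun t ht => ?_⟩
    rcases le_or_gt t t₀ with h | h
    · exact le_max_of_le_left h
    · have h1 := hrho_key t₀ ht₀ t ht h.le
      have h2 := hρpos t ht
      refine le_max_of_le_right ?_
      linarith
  set b := sSup D with hb
  have hbnotin : b ∉ D := by
    intro hbin
    obtain ⟨ε, hε, hball⟩ := Metric.isOpen_iff.1 hDopen b hbin
    have hmem : b + ε/2 ∈ D := hball (by
      rw [Metric.mem_ball, Real.dist_eq]
      have he : b + ε/2 - b = ε/2 := by ring
      rw [he, abs_of_pos (half_pos hε)]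
      linarith)
    have := le_csSup hBdd hmem
    linarith
  have hlt_b : ∀ t ∈ D, t < b :=
    fun t ht => lt_of_le_of_ne (le_csSup hBdd ht) (fun h => hbnotin (h ▸ ht))
  -- sign of μ - 1 is constant
  have hsign : (∀ t ∈ D, μ t < 1) ∨ (∀ t ∈ D, 1 < μ t) := by
    by_contra hcon
    push_neg at hcon
    obtain ⟨⟨u, hu, hu1⟩, ⟨w, hw, hw1⟩⟩ := hcon
    have hu1' : 1 < μ u := lt_of_le_of_ne hu1 (Ne.symm (hμne1 u hu))
    have hw1' : μ w < 1 := lt_of_le_of_ne hw1 (hμne1 w hw)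
    rcases le_total u w with h | h
    · have hsub : Icc u w ⊆ D := hDconn.out hu hw
      have hcont : ContinuousOn μ (Icc u w) := fun x hx =>
        (hμ x (hsub hx)).continuousAt.continuousWithinAt
      obtain ⟨x, hx, hx1⟩ := intermediate_value_Icc' h hcont
        (Set.mem_Icc.2 ⟨hw1'.le, hu1'.le⟩)
      exact hμne1 x (hsub hx) hx1
    · have hsub : Icc w u ⊆ D := hDconn.out hw hu
      have hcont : ContinuousOn μ (Icc w u) := fun x hx =>
        (hμ x (hsub hx)).continuousAt.continuousWithinAt
      obtain ⟨x, hx, hx1⟩ := intermediate_value_Icc h hcont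
        (Set.mem_Icc.2 ⟨hw1'.le, hu1'.le⟩)
      exact hμne1 x (hsub hx) hx1
  -- D is NOT bounded below
  have hNoBdd : ¬ BddBelow D := by
    intro hBddB
    set a := sInf D with ha
    have hanotin : a ∉ D := by
      intro hain
      obtain ⟨ε, hε, hball⟩ := Metric.isOpen_iff.1 hDopen a hain
      have hmem : a - ε/2 ∈ D := hball (by
        rw [Metric.mem_ball, Real.dist_eq]
        have he : a - ε/2 - a = -(ε/2) := by ring
        rw [he, abs_neg, abs_of_pos (half_pos hε)]
        linarith)
      have := csInf_le hBddB hmem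
      linarith
    have hagt : ∀ t ∈ D, a < t :=
      fun t ht => lt_of_le_of_ne (csInf_le hBddB ht) (fun h => hanotin (h ▸ ht))
    have hD_eq : D = Ioo a b := by
      ext t
      constructor
      · exact fun ht => ⟨hagt t ht, hlt_b t ht⟩
      · rintro ⟨h1, h2⟩
        obtain ⟨s, hs, hst⟩ := (csInf_lt_iff hBddB ⟨t₀, ht₀⟩).1 h1
        obtain ⟨u, hu, htu⟩ := (lt_csSup_iff hBdd ⟨t₀, ht₀⟩).1 h2
        exact hDconn.out hs hu ⟨hst.le, htu.le⟩
    have hat₀ : a < t₀ := hagt t₀ ht₀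
    have hIocsub : Ioc a t₀ ⊆ D := by
      intro t ht
      rw [hD_eq]
      exact ⟨ht.1, lt_of_le_of_lt ht.2 (hlt_b t₀ ht₀)⟩
    have hIoosub : Ioo a t₀ ⊆ D := fun t ht => hIocsub (Ioo_subset_Ioc_self ht)
    -- bounds for μ on Ioc a t₀
    set mℓ := min (μ t₀) 1 with hmℓ
    set mu := max (μ t₀) 1 with hmu
    have hmℓpos : 0 < mℓ := lt_min (hμpos t₀ ht₀) one_pos
    have hμbdd : ∀ t ∈ Ioc a t₀, mℓ ≤ μ t ∧ μ t ≤ mu := by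
      intro t ht
      have htD := hIocsub ht
      rcases hsign with hs | hs
      · have hmono : μ t₀ ≤ μ t := by
          refine antitone_pair hDconn hμ (fun u hu => ?_) htD ht₀ ht.2
          exact div_nonpos_iff.2 (Or.inr ⟨by linarith [hs u hu], (hρpos u hu).le⟩)
        exact ⟨le_trans (min_le_left _ _) hmono, le_trans (hs t htD).le (le_max_right _ _)⟩
      · have hmono : μ t ≤ μ t₀ := by
          refine monotone_pair hDconn hμ (fun u hu => ?_) htD ht₀ ht.2
          exact div_nonneg (by linarith [hs u hu]) (hρpos u hu).le
        exact ⟨le_trans (min_le_right _ _) (hs t htD).le, le_trans hmono (le_max_left _ _)⟩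
    -- bounds for ρ on Ioc a t₀
    have hρlb : ∀ t ∈ Ioc a t₀, ρ t₀ ≤ ρ t := by
      intro t ht
      have := hrho_key t (hIocsub ht) t₀ ht₀ ht.2
      have h2 := ht.2
      linarith
    set K := 4*(mℓ⁻¹ + 3) with hK
    have hKpos : 0 < K := by positivity
    have hρub : ∀ t ∈ Ioc a t₀, ρ t ≤ ρ t₀ + K*(t₀ - a) := by
      intro t ht
      have hmono : ρ t + K*t ≤ ρ t₀ + K*t₀ := by
        refine monotone_pair (D := Ioc a t₀) ordConnected_Ioc
          (f := fun s => ρ s + K*s) (f' := fun s => -4*((μ s)⁻¹+3)+K) ?_ ?_ ht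
          ⟨hat₀, le_refl t₀⟩ ht.2
        · intro u hu
          have h12 : HasDerivAt (fun s : ℝ => K*s) K u := by
            simpa using (hasDerivAt_id u).const_mul K
          exact (hρ u (hIocsub hu)).add h12
        · intro u hu
          have h1 : (μ u)⁻¹ ≤ mℓ⁻¹ :=
            inv_anti₀ hmℓpos (hμbdd u hu).1
          rw [hK]
          linarith
      have h1 := ht.1
      nlinarith [mul_nonneg hKpos.le (by linarith : (0:ℝ) ≤ t - a)]
    set Rmax := ρ t₀ + K*(t₀ - a) with hRmax
    have hne : (Ioo a t₀).Nonempty := nonempty_Ioo.2 hat₀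
    -- limit of ρ at a from the right
    have hρanti : AntitoneOn ρ (Ioo a t₀) := by
      intro x hx y hy hxy
      have := hrho_key x (hIoosub hx) y (hIoosub hy) hxy
      linarith
    have hρbddA : BddAbove (ρ '' Ioo a t₀) := by
      refine ⟨Rmax, ?_⟩
      rintro y ⟨x, hx, rfl⟩
      exact hρub x (Ioo_subset_Ioc_self hx)
    set ρa := sSup (ρ '' Ioo a t₀) with hρadef
    have hρtend : Tendsto ρ (𝓝[>] a) (𝓝 ρa) :=
      hρanti.tendsto_nhdsWithin_Ioo_right hne hρbddA
    obtain ⟨x₁, hx₁⟩ := hne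
    have hρa_pos : 0 < ρa :=
      lt_of_lt_of_le (hρpos x₁ (hIoosub hx₁)) (le_csSup hρbddA (mem_image_of_mem ρ hx₁))
    -- limit of μ at a from the right
    obtain ⟨μa, hμtend⟩ : ∃ m, Tendsto μ (𝓝[>] a) (𝓝 m) := by
      rcases hsign with hs | hs
      · have hμanti : AntitoneOn μ (Ioo a t₀) := by
          intro x hx y hy hxy
          refine antitone_pair hDconn hμ (fun u hu => ?_) (hIoosub hx) (hIoosub hy) hxy
          exact div_nonpos_iff.2 (Or.inr ⟨by linarith [hs u hu], (hρpos u hu).le⟩)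
        exact ⟨_, hμanti.tendsto_nhdsWithin_Ioo_right ⟨x₁, hx₁⟩
          ⟨mu, by rintro y ⟨x, hx, rfl⟩; exact (hμbdd x (Ioo_subset_Ioc_self hx)).2⟩⟩
      · have hμmono : MonotoneOn μ (Ioo a t₀) := by
          intro x hx y hy hxy
          refine monotone_pair hDconn hμ (fun u hu => ?_) (hIoosub hx) (hIoosub hy) hxy
          exact div_nonneg (by linarith [hs u hu]) (hρpos u hu).le
        exact ⟨_, hμmono.tendsto_nhdsWithin_Ioo_right ⟨x₁, hx₁⟩
          ⟨mℓ, by rintro y ⟨x, hx, rfl⟩; exact (hμbdd x (Ioo_subset_Ioc_self hx)).1⟩⟩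
    have hμa_lb : mℓ ≤ μa := by
      refine ge_of_tendsto hμtend ?_
      filter_upwards [Ioo_mem_nhdsGT hat₀] with x hx
      exact (hμbdd x (Ioo_subset_Ioc_self hx)).1
    have hμa_pos : 0 < μa := lt_of_lt_of_le hmℓpos hμa_lb
    -- local solution at (a, (ρa, μa))
    set v : ℝ × ℝ → ℝ × ℝ := fun p => (-4*(p.2⁻¹+3), 4*(p.2-1)/p.1) with hv
    have hvC : ContDiffAt ℝ 1 v ((ρa, μa) : ℝ × ℝ) := by
      apply ContDiffAt.prodMk
      · have hsnd : ContDiffAt ℝ 1 (fun p : ℝ × ℝ => p.2) (ρa, μa) := contDiff_snd.contDiffAt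
        have hinv : ContDiffAt ℝ 1 (fun p : ℝ × ℝ => (p.2)⁻¹) (ρa, μa) :=
          hsnd.inv (ne_of_gt hμa_pos)
        exact contDiffAt_const.mul (hinv.add contDiffAt_const)
      · have hsnd : ContDiffAt ℝ 1 (fun p : ℝ × ℝ => p.2) (ρa, μa) := contDiff_snd.contDiffAt
        have hfst : ContDiffAt ℝ 1 (fun p : ℝ × ℝ => p.1) (ρa, μa) := contDiff_fst.contDiffAt
        exact (contDiffAt_const.mul (hsnd.sub contDiffAt_const)).div hfst (ne_of_gt hρa_pos)
    obtain ⟨f, hf0, ε, hε, hf⟩ := hvC.exists_forall_mem_closedBall_exists_eq_forall_mem_Ioo_hasDerivAt₀ a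
    have haIoo : a ∈ Ioo (a - ε) (a + ε) := ⟨by linarith, by linarith⟩
    have hconta : ContinuousAt f a := (hf a haIoo).continuousAt
    have hev : ∀ᶠ t in 𝓝 a, (0 < (f t).1 ∧ 0 < (f t).2) ∧ t ∈ Ioo (a-ε) (a+ε) := by
      have h0 : Tendsto f (𝓝 a) (𝓝 ((ρa, μa) : ℝ × ℝ)) := by
        rw [← hf0]; exact hconta
      have h1 : Tendsto (fun t => (f t).1) (𝓝 a) (𝓝 ρa) :=
        (continuous_fst.tendsto ((ρa, μa) : ℝ × ℝ)).comp h0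
      have h2 : Tendsto (fun t => (f t).2) (𝓝 a) (𝓝 μa) :=
        (continuous_snd.tendsto ((ρa, μa) : ℝ × ℝ)).comp h0
      have e1 : ∀ᶠ t in 𝓝 a, 0 < (f t).1 := h1.eventually (eventually_gt_nhds hρa_pos)
      have e2 : ∀ᶠ t in 𝓝 a, 0 < (f t).2 := h2.eventually (eventually_gt_nhds hμa_pos)
      exact (e1.and e2).and (Ioo_mem_nhds (by linarith) (by linarith))
    obtain ⟨δ₁, hδ₁, hballf⟩ := Metric.eventually_nhds_iff_ball.1 hev
    set δ := min δ₁ (t₀ - a) with hδdef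
    have hδpos : 0 < δ := lt_min hδ₁ (by linarith)
    have hδε : ∀ t, |t - a| < δ → ((0 < (f t).1 ∧ 0 < (f t).2) ∧ t ∈ Ioo (a-ε) (a+ε)) := by
      intro t htd
      refine hballf t ?_
      rw [Metric.mem_ball, Real.dist_eq]
      exact lt_of_lt_of_le htd (min_le_left _ _)
    -- glued functions
    set ρ' : ℝ → ℝ := fun t => if t ≤ a then (f t).1 else ρ t with hρ'def
    set μ' : ℝ → ℝ := fun t => if t ≤ a then (f t).2 else μ t with hμ'def
    set D' : Set ℝ := Ioo (a - δ) b with hD'def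
    have hD'open : IsOpen D' := isOpen_Ioo
    have hD'conn : D'.OrdConnected := ordConnected_Ioo
    have hDsub : D ⊆ D' := by
      rw [hD_eq]
      rintro t ⟨h1, h2⟩
      exact ⟨by linarith, h2⟩
    have hρ'ne : ∀ t, a < t → ρ' t = ρ t := by
      intro t h
      simp only [hρ'def]
      rw [if_neg (not_le.2 h)]
    have hμ'ne : ∀ t, a < t → μ' t = μ t := by
      intro t h
      simp only [hμ'def]
      rw [if_neg (not_le.2 h)]
    have hρ'le : ∀ t, t ≤ a → ρ' t = (f t).1 := by
      intro t h
      simp only [hρ'def]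
      rw [if_pos h]
    have hμ'le : ∀ t, t ≤ a → μ' t = (f t).2 := by
      intro t h
      simp only [hμ'def]
      rw [if_pos h]
    have hagree : ∀ t ∈ D, ρ' t = ρ t ∧ μ' t = μ t :=
      fun t ht => ⟨hρ'ne t (hagt t ht), hμ'ne t (hagt t ht)⟩
    have hρ'a : ρ' a = ρa := by rw [hρ'le a le_rfl, hf0]
    have hμ'a : μ' a = μa := by rw [hμ'le a le_rfl, hf0]
    -- the main property check
    have hprops : ∀ t ∈ D', 0 < ρ' t ∧ 0 < μ' t ∧
        HasDerivAt μ' (4 * (μ' t - 1) / ρ' t) t ∧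
        HasDerivAt ρ' (-4 * ((μ' t)⁻¹ + 3)) t := by
      intro t ht
      rcases lt_trichotomy t a with hta | hta | hta
      · -- t < a
        have habs : |t - a| < δ := by
          rw [abs_lt]
          exact ⟨by linarith [ht.1], by linarith⟩
        obtain ⟨⟨hp1, hp2⟩, htε⟩ := hδε t habs
        have heq1 : ρ' t = (f t).1 := hρ'le t hta.le
        have heq2 : μ' t = (f t).2 := hμ'le t hta.le
        have hd := hf t htε
        have hev1 : ρ' =ᶠ[nhds t] (fun s => (f s).1) := by
          filter_upwards [Iio_mem_nhds hta] with y hy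
          exact hρ'le y (le_of_lt hy)
        have hev2 : μ' =ᶠ[nhds t] (fun s => (f s).2) := by
          filter_upwards [Iio_mem_nhds hta] with y hy
          exact hμ'le y (le_of_lt hy)
        refine ⟨by rw [heq1]; exact hp1, by rw [heq2]; exact hp2, ?_, ?_⟩
        · have h1 : HasDerivAt μ' (v (f t)).2 t := hd.snd'.congr_of_eventuallyEq hev2
          convert h1 using 1
          rw [heq1, heq2, hv]
        · have h1 : HasDerivAt ρ' (v (f t)).1 t := hd.fst'.congr_of_eventuallyEq hev1
          convert h1 using 1
          rw [heq2, hv]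
      · -- t = a
        subst hta
        have hsmem : Ioo a (a+δ) ∈ 𝓝[>] a := Ioo_mem_nhdsGT (by linarith)
        have hsubD2 : Ioo a (a+δ) ⊆ D := by
          intro x hx
          refine hIocsub ⟨hx.1, ?_⟩
          have h1 : δ ≤ t₀ - a := by rw [hδdef]; exact min_le_right _ _
          have h2 := hx.2
          linarith
        have hρ'd : ∀ x ∈ Ioo a (a+δ), HasDerivAt ρ' (-4*((μ x)⁻¹+3)) x := by
          intro x hx
          apply (hρ x (hsubD2 hx)).congr_of_eventuallyEq
          filter_upwards [Ioi_mem_nhds hx.1] with y hy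
          exact hρ'ne y hy
        have hμ'd : ∀ x ∈ Ioo a (a+δ), HasDerivAt μ' (4*(μ x - 1)/ρ x) x := by
          intro x hx
          apply (hμ x (hsubD2 hx)).congr_of_eventuallyEq
          filter_upwards [Ioi_mem_nhds hx.1] with y hy
          exact hμ'ne y hy
        have hμinvtend : Tendsto (fun x => -4*((μ x)⁻¹+3)) (𝓝[>] a) (𝓝 (-4*(μa⁻¹+3))) := by
          have h1 := (hμtend.inv₀ (ne_of_gt hμa_pos)).add (tendsto_const_nhds (x := (3:ℝ)))
          exact h1.const_mul (-4)
        have hμdtend : Tendsto (fun x => 4*(μ x - 1)/ρ x) (𝓝[>] a) (𝓝 (4*(μa-1)/ρa)) :=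
          (((hμtend.sub_const 1).const_mul 4)).div hρtend (ne_of_gt hρa_pos)
        have hr1 : HasDerivWithinAt ρ' (-4*(μa⁻¹+3)) (Ici a) a := by
          apply hasDerivWithinAt_Ici_of_tendsto_deriv
            (fun x hx => ((hρ'd x hx).differentiableAt).differentiableWithinAt)
            ?_ hsmem ?_
          · show Tendsto ρ' (𝓝[Ioo a (a+δ)] a) (𝓝 (ρ' a))
            rw [hρ'a]
            refine Filter.Tendsto.congr' ?_
              (hρtend.mono_left (nhdsWithin_mono a Ioo_subset_Ioi_self))
            filter_upwards [self_mem_nhdsWithin] with x hx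
            exact (hρ'ne x hx.1).symm
          · refine Filter.Tendsto.congr' ?_ hμinvtend
            filter_upwards [hsmem] with x hx
            exact ((hρ'd x hx).deriv).symm
        have hr2 : HasDerivWithinAt μ' (4*(μa-1)/ρa) (Ici a) a := by
          apply hasDerivWithinAt_Ici_of_tendsto_deriv
            (fun x hx => ((hμ'd x hx).differentiableAt).differentiableWithinAt)
            ?_ hsmem ?_
          · show Tendsto μ' (𝓝[Ioo a (a+δ)] a) (𝓝 (μ' a))
            rw [hμ'a]
            refine Filter.Tendsto.congr' ?_
              (hμtend.mono_left (nhdsWithin_mono a Ioo_subset_Ioi_self))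
            filter_upwards [self_mem_nhdsWithin] with x hx
            exact (hμ'ne x hx.1).symm
          · refine Filter.Tendsto.congr' ?_ hμdtend
            filter_upwards [hsmem] with x hx
            exact ((hμ'd x hx).deriv).symm
        have hfa := hf a haIoo
        have hvfa : v (f a) = (-4*(μa⁻¹+3), 4*(μa-1)/ρa) := by rw [hf0, hv]
        have hl1 : HasDerivWithinAt ρ' (-4*(μa⁻¹+3)) (Iic a) a := by
          have h2 := hfa.fst'
          rw [hvfa] at h2
          exact (h2.hasDerivWithinAt).congr (fun y hy => hρ'le y hy) (hρ'le a le_rfl)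
        have hl2 : HasDerivWithinAt μ' (4*(μa-1)/ρa) (Iic a) a := by
          have h2 := hfa.snd'
          rw [hvfa] at h2
          exact (h2.hasDerivWithinAt).congr (fun y hy => hμ'le y hy) (hμ'le a le_rfl)
        have hda1 : HasDerivAt ρ' (-4*(μa⁻¹+3)) a := by
          have h3 := hl1.union hr1
          rw [Iic_union_Ici] at h3
          exact hasDerivWithinAt_univ.1 h3
        have hda2 : HasDerivAt μ' (4*(μa-1)/ρa) a := by
          have h3 := hl2.union hr2
          rw [Iic_union_Ici] at h3
          exact hasDerivWithinAt_univ.1 h3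
        refine ⟨by rw [hρ'a]; exact hρa_pos, by rw [hμ'a]; exact hμa_pos, ?_, ?_⟩
        · rw [hμ'a, hρ'a]
          exact hda2
        · rw [hμ'a]
          exact hda1
      · -- t > a
        have htD : t ∈ D := by
          rw [hD_eq]
          exact ⟨hta, ht.2⟩
        have heq1 : ρ' t = ρ t := hρ'ne t hta
        have heq2 : μ' t = μ t := hμ'ne t hta
        have hev1 : ρ' =ᶠ[nhds t] ρ := by
          filter_upwards [Ioi_mem_nhds hta] with y hy
          exact hρ'ne y hy
        have hev2 : μ' =ᶠ[nhds t] μ := by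
          filter_upwards [Ioi_mem_nhds hta] with y hy
          exact hμ'ne y hy
        refine ⟨heq1 ▸ hρpos t htD, heq2 ▸ hμpos t htD, ?_, ?_⟩
        · rw [heq1, heq2]
          exact (hμ t htD).congr_of_eventuallyEq hev2
        · rw [heq2]
          exact (hρ t htD).congr_of_eventuallyEq hev1
    have hD'eq := hmax D' ρ' μ' hD'open hD'conn hDsub hagree hprops
    have haD' : a ∈ D' := ⟨by linarith, lt_trans hat₀ (hlt_b t₀ ht₀)⟩
    rw [hD'eq] at haD'
    exact hanotin haD'
  -- D = Iio b
  have hDIio : D = Iio b := by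
    ext t
    constructor
    · exact fun ht => hlt_b t ht
    · intro ht
      obtain ⟨u, hu, htu⟩ := (lt_csSup_iff hBdd ⟨t₀, ht₀⟩).1 ht
      obtain ⟨s, hs, hst⟩ := not_bddBelow_iff.1 hNoBdd t
      exact hDconn.out hs hu ⟨hst.le, htu.le⟩
  have hmemD : ∀ t, t < b → t ∈ D := fun t ht => hDIio ▸ ht
  refine ⟨b, hDIio, ?_, ?_⟩
  · -- ρ → ∞ as t → -∞
    have hcomp : ∀ᶠ t in atBot, ρ t₀ + 12*(t₀ - t) ≤ ρ t := by
      filter_upwards [eventually_le_atBot (min t₀ (b-1))] with t ht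
      have htD : t ∈ D := hmemD t (by
        have := min_le_right t₀ (b-1); linarith [le_trans ht (min_le_right t₀ (b-1))])
      have htt₀ : t ≤ t₀ := le_trans ht (min_le_left _ _)
      have := hrho_key t htD t₀ ht₀ htt₀
      linarith
    refine tendsto_atTop_mono' atBot hcomp ?_
    have h1 : Tendsto (fun t : ℝ => t₀ - t) atBot atTop :=
      tendsto_atTop_add_const_left _ t₀ tendsto_neg_atBot_atTop
    have h2 : Tendsto (fun t : ℝ => 12*(t₀ - t)) atBot atTop :=
      h1.const_mul_atTop (by norm_num)
    exact tendsto_atTop_add_const_left _ (ρ t₀) h2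
  · -- μ → 1 as t → -∞
    rw [Metric.tendsto_nhds]
    intro ε hε
    set ε' := min ε 1 with hε'
    have hε'pos : 0 < ε' := lt_min hε one_pos
    set θ := min (ε'^4/2) (1/2) with hθ
    have hθpos : 0 < θ := lt_min (by positivity) one_half_pos
    have hcomp : ∀ᶠ t in atBot, t ∈ D ∧ c/θ < ρ t := by
      filter_upwards [eventually_le_atBot (min (min t₀ (b-1)) (t₀ - (c/θ)/12))] with t ht
      have ht1 : t ≤ min t₀ (b-1) := le_trans ht (min_le_left _ _)
      have ht2 : t ≤ t₀ - (c/θ)/12 := le_trans ht (min_le_right _ _)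
      have htD : t ∈ D := hmemD t (by linarith [le_trans ht1 (min_le_right t₀ (b-1))])
      have htt₀ : t ≤ t₀ := le_trans ht1 (min_le_left _ _)
      refine ⟨htD, ?_⟩
      have hk := hrho_key t htD t₀ ht₀ htt₀
      have hρt₀ := hρpos t₀ ht₀
      have : c/θ ≤ 12*(t₀ - t) := by linarith
      linarith
    filter_upwards [hcomp] with t ⟨htD, hρbig⟩
    have hρt := hρpos t htD
    have hμt := hμpos t htD
    have hE := hFeq t htD
    rw [hF] at hE
    have h5 : (μ t - 1)^4 / μ t = c / ρ t := by
      rw [eq_div_iff (ne_of_gt hρt), ← hE]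
      field_simp
    have h6 : c / ρ t < θ := by
      rw [div_lt_iff₀ hρt]
      have := (div_lt_iff₀ hθpos).1 hρbig
      linarith [mul_comm θ (ρ t)]
    have h7 : |μ t - 1| < ε' := gbound hμt hε'pos (by rw [← h5] at h6; exact h6)
    rw [Real.dist_eq]
    exact lt_of_lt_of_le h7 (min_le_left _ _)
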